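/- Gradient approximation bound for rubric rewards: let X be a finite probability space with distribution π_θ (all outcomes having positive probability), let s(o) = ∇_θ log π_θ(o) ∈ ℝⁿ be the score function (satisfying E[s] = 0), let f_I : X → {0,1}ᵈ and w_I ∈ ℝᵈ, and suppose the true reward U and estimated reward R satisfy U(o) − R(o) = w_Iᵀ f_I(o) for all o. Then ‖E[s · U] − E[s · R]‖₂ ≤ sqrt(E[‖s‖₂²]) · ‖w_I‖₁. -/
import Mathlib


/-- Proposition 1: gradient approximation bound for rubric rewards.
If `U - R = w_Iᵀ f_I` with binary `f_I`, then the gap between the true and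
estimated policy gradients is at most `sqrt(E[‖s‖²]) * ‖w_I‖₁`. -/
theorem gradient_approx_bound {n d : ℕ} {X : Type*} [Fintype X]
    (p : X → ℝ) (hp : ∀ x, 0 < p x) (hp1 : ∑ x, p x = 1)
    (s : X → EuclideanSpace ℝ (Fin n)) (hEs : ∑ x, p x • s x = 0)
    (fI : X → Fin d → ℝ) (hfI : ∀ x k, fI x k = 0 ∨ fI x k = 1)
    (wI : Fin d → ℝ) (U R : X → ℝ)
    (hUR : ∀ x, U x - R x = ∑ k, wI k * fI x k) :
    ‖(∑ x, p x • (U x • s x)) - ∑ x, p x • (R x • s x)‖ ≤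
      Real.sqrt (∑ x, p x * ‖s x‖ ^ 2) * ∑ k, |wI k| := by
  set W := ∑ k, |wI k| with hW
  have hWnn : 0 ≤ W := Finset.sum_nonneg fun k _ => abs_nonneg _
  -- bound |U x - R x| ≤ W
  have hY : ∀ x, |U x - R x| ≤ W := by
    intro x
    rw [hUR x]
    calc |∑ k, wI k * fI x k| ≤ ∑ k, |wI k * fI x k| := Finset.abs_sum_le_sum_abs _ _
      _ ≤ ∑ k, |wI k| := by
          apply Finset.sum_le_sum
          intro k _
          rw [abs_mul]
          rcases hfI x k with h | h <;> simp [h]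
  -- rewrite difference as single sum
  have hdiff : (∑ x, p x • (U x • s x)) - ∑ x, p x • (R x • s x)
      = ∑ x, ((p x * (U x - R x)) • s x) := by
    rw [← Finset.sum_sub_distrib]
    congr 1; ext x
    rw [smul_smul, smul_smul, ← sub_smul]
    ring_nf
  rw [hdiff]
  have step1 : ‖∑ x, ((p x * (U x - R x)) • s x)‖ ≤ ∑ x, (p x * W) * ‖s x‖ := by
    refine (norm_sum_le _ _).trans ?_
    apply Finset.sum_le_sum
    intro x _
    rw [norm_smul, Real.norm_eq_abs, abs_mul, abs_of_pos (hp x)]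
    gcongr
    · exact (hp x).le
    · exact hY x
  refine step1.trans ?_
  have h2 : ∑ x, (p x * W) * ‖s x‖ = W * ∑ x, p x * ‖s x‖ := by
    rw [Finset.mul_sum]; congr 1; ext x; ring
  rw [h2]
  have hCS : (∑ x, p x * ‖s x‖) ≤ Real.sqrt (∑ x, p x * ‖s x‖ ^ 2) := by
    have key := Finset.sum_mul_sq_le_sq_mul_sq Finset.univ
      (fun x => Real.sqrt (p x)) (fun x => Real.sqrt (p x) * ‖s x‖)
    have e1 : ∀ x : X, Real.sqrt (p x) * (Real.sqrt (p x) * ‖s x‖) = p x * ‖s x‖ := by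
      intro x
      rw [← mul_assoc, Real.mul_self_sqrt (hp x).le]
    have e2 : ∀ x : X, Real.sqrt (p x) ^ 2 = p x := fun x => Real.sq_sqrt (hp x).le
    have e3 : ∀ x : X, (Real.sqrt (p x) * ‖s x‖) ^ 2 = p x * ‖s x‖ ^ 2 := by
      intro x
      rw [mul_pow, Real.sq_sqrt (hp x).le]
    simp only [e1, e2, e3, hp1, one_mul] at key
    have hnn : 0 ≤ ∑ x, p x * ‖s x‖ :=
      Finset.sum_nonneg fun x _ => mul_nonneg (hp x).le (norm_nonneg _)
    have hnn2 : 0 ≤ ∑ x, p x * ‖s x‖ ^ 2 :=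
      Finset.sum_nonneg fun x _ => mul_nonneg (hp x).le (sq_nonneg _)
    exact (Real.le_sqrt hnn hnn2).mpr key
  calc W * ∑ x, p x * ‖s x‖ ≤ W * Real.sqrt (∑ x, p x * ‖s x‖ ^ 2) := by gcongr
    _ = Real.sqrt (∑ x, p x * ‖s x‖ ^ 2) * W := mul_comm _ _
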